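/- Let V be a countable type, let β₊ ≥ 0 be real, let d : V → ℝ satisfy 0 ≤ d(v) ≤ β₊ for all v, and let t : V → V → ℂ be a Hermitian kernel, t(v,u) = conj(t(u,v)), such that for every v the family (|t(v,u)|)_{u ∈ V} is summable with ∑_u |t(v,u)| ≤ d(v). Let A : ℓ²(V) →L[ℂ] ℓ²(V) be a bounded operator satisfying (A f)(v) = d(v)·f(v) − ∑'_{u} t(v,u)·f(u) for all f ∈ ℓ²(V) and v ∈ V. Then 0 ≤ Re⟨f, A f⟩ ≤ 2·β₊·‖f‖² for every f ∈ ℓ²(V). -/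

import Mathlib

/-- Key lemma behind Theorem 2.2: a Hermitian "Laplacian-like" operator whose diagonal is
`d v ∈ [0, β₊]` and whose off-diagonal kernel is row-wise dominated by `d v` has quadratic
form contained in `[0, 2β₊]`. -/
theorem bridge_laplacian_form_bounds {V : Type*} [Countable V]
    (betaPlus : ℝ) (hbeta : 0 ≤ betaPlus)
    (d : V → ℝ) (hd : ∀ v, 0 ≤ d v ∧ d v ≤ betaPlus)
    (t : V → V → ℂ) (ht : ∀ v u, t v u = starRingEnd ℂ (t u v))
    (hsum : ∀ v, Summable (fun u => ‖t v u‖))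
    (hdom : ∀ v, ∑' u, ‖t v u‖ ≤ d v)
    (A : lp (fun _ : V => ℂ) 2 →L[ℂ] lp (fun _ : V => ℂ) 2)
    (hA : ∀ (f : lp (fun _ : V => ℂ) 2) (v : V),
      A f v = (d v : ℂ) * f v - ∑' u, t v u * f u) :
    ∀ f : lp (fun _ : V => ℂ) 2,
      0 ≤ (inner (𝕜 := ℂ) f (A f)).re ∧
        (inner (𝕜 := ℂ) f (A f)).re ≤ 2 * betaPlus * ‖f‖ ^ 2 := by
  intro f
  -- basic notation
  set F : V → ℝ := fun v => ‖f v‖ ^ 2 with hFdef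
  have hF0 : ∀ v, 0 ≤ F v := fun v => sq_nonneg _
  -- summability of ‖f v‖²
  have h2toReal : ((2 : ENNReal).toReal) = (2 : ℝ) := by norm_num
  have hrpow : ∀ x : ℝ, x ^ ((2 : ENNReal).toReal) = x ^ 2 := by
    intro x
    rw [h2toReal, show (2:ℝ) = ((2:ℕ):ℝ) by norm_num, Real.rpow_natCast]
  have hFsum : Summable F := by
    have h := (lp.memℓp f).summable (by rw [h2toReal]; norm_num : 0 < (2 : ENNReal).toReal)
    have h2 : (fun v => ‖f v‖ ^ ((2 : ENNReal).toReal)) = F := by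
      funext v; rw [hrpow]
    rwa [h2] at h
  -- norm identity
  have hnorm : ‖f‖ ^ 2 = ∑' v, F v := by
    have h := lp.norm_rpow_eq_tsum (by rw [h2toReal]; norm_num : 0 < (2 : ENNReal).toReal) f
    have e1 : ‖f‖ ^ ((2 : ENNReal).toReal) = ‖f‖ ^ 2 := hrpow _
    have e2 : (fun v => ‖f v‖ ^ ((2 : ENNReal).toReal)) = F := by
      funext v; rw [hrpow]
    rw [e1, e2] at h
    exact h
  -- symmetric norm kernel
  have htnorm : ∀ v u, ‖t v u‖ = ‖t u v‖ := by
    intro v u; rw [ht v u]; simp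
  -- the three product families
  set h1 : V × V → ℝ := fun p => ‖t p.1 p.2‖ * F p.1 with hh1
  set gp : V × V → ℝ := fun p => ‖t p.1 p.2‖ * (‖f p.1‖ * ‖f p.2‖) with hgpdef
  have h1nonneg : ∀ p, 0 ≤ h1 p := fun p => mul_nonneg (norm_nonneg _) (hF0 _)
  have hcolbound : ∀ v, (∑' u, ‖t v u‖) * F v ≤ betaPlus * F v := fun v =>
    mul_le_mul_of_nonneg_right ((hdom v).trans (hd v).2) (hF0 v)
  have hcolsum : Summable (fun v => (∑' u, ‖t v u‖) * F v) :=
    Summable.of_nonneg_of_le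
      (fun v => mul_nonneg (tsum_nonneg fun u => norm_nonneg _) (hF0 v))
      hcolbound (hFsum.mul_left betaPlus)
  have h1sum : Summable h1 := by
    rw [summable_prod_of_nonneg h1nonneg]
    constructor
    · intro v; exact (hsum v).mul_right (F v)
    · have : (fun v => ∑' u, h1 (v, u)) = fun v => (∑' u, ‖t v u‖) * F v := by
        funext v; simp only [hh1]; exact tsum_mul_right
      rw [this]; exact hcolsum
  have h2sum : Summable (fun p : V × V => ‖t p.1 p.2‖ * F p.2) := by
    have : (fun p : V × V => ‖t p.1 p.2‖ * F p.2)
        = h1 ∘ (Equiv.prodComm V V) := by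
      funext p; simp [hh1, Function.comp, htnorm p.1 p.2]
    rw [this, Equiv.summable_iff]
    exact h1sum
  have hgpnonneg : ∀ p, 0 ≤ gp p :=
    fun p => mul_nonneg (norm_nonneg _) (mul_nonneg (norm_nonneg _) (norm_nonneg _))
  have hgple : ∀ p : V × V, gp p ≤ (h1 p + ‖t p.1 p.2‖ * F p.2) / 2 := by
    intro p
    have hab : ‖f p.1‖ * ‖f p.2‖ ≤ (F p.1 + F p.2) / 2 := by
      have := sq_nonneg (‖f p.1‖ - ‖f p.2‖)
      simp only [hFdef]; nlinarith
    have := mul_le_mul_of_nonneg_left hab (norm_nonneg (t p.1 p.2))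
    simp only [hh1, hgpdef]; nlinarith [norm_nonneg (t p.1 p.2)]
  have hgpsum : Summable gp :=
    Summable.of_nonneg_of_le hgpnonneg hgple ((h1sum.add h2sum).div_const 2)
  -- the total double sum G and its bound by D
  set D : ℝ := ∑' v, d v * F v with hDdef
  have hDsummand_nonneg : ∀ v, 0 ≤ d v * F v := fun v => mul_nonneg (hd v).1 (hF0 v)
  have hDsum : Summable (fun v => d v * F v) :=
    Summable.of_nonneg_of_le hDsummand_nonneg
      (fun v => mul_le_mul_of_nonneg_right (hd v).2 (hF0 v)) (hFsum.mul_left betaPlus)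
  have hD0 : 0 ≤ D := tsum_nonneg hDsummand_nonneg
  have hDle : D ≤ betaPlus * ∑' v, F v := by
    rw [← tsum_mul_left]
    exact Summable.tsum_le_tsum (fun v => mul_le_mul_of_nonneg_right (hd v).2 (hF0 v))
      hDsum (hFsum.mul_left betaPlus)
  have hGle : (∑' p, gp p) ≤ D := by
    have e1 : ∑' p : V × V, ‖t p.1 p.2‖ * F p.2 = ∑' p, h1 p := by
      rw [show (fun p : V × V => ‖t p.1 p.2‖ * F p.2) = h1 ∘ (Equiv.prodComm V V) by
        funext p; simp [hh1, Function.comp, htnorm p.1 p.2]]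
      exact (Equiv.prodComm V V).tsum_eq h1
    have step1 : (∑' p, gp p) ≤ ∑' p, h1 p := by
      calc (∑' p, gp p) ≤ ∑' p, (h1 p + ‖t p.1 p.2‖ * F p.2) / 2 :=
            Summable.tsum_le_tsum hgple hgpsum ((h1sum.add h2sum).div_const 2)
        _ = ((∑' p, h1 p) + ∑' p : V × V, ‖t p.1 p.2‖ * F p.2) / 2 := by
            rw [tsum_div_const, Summable.tsum_add h1sum h2sum]
        _ = ∑' p, h1 p := by rw [e1]; ring
    refine step1.trans ?_
    rw [Summable.tsum_prod' h1sum (fun v => (hsum v).mul_right (F v))]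
    have e2 : (fun v => ∑' u, h1 (v, u)) = fun v => (∑' u, ‖t v u‖) * F v := by
      funext v; simp only [hh1]; exact tsum_mul_right
    rw [e2]
    exact Summable.tsum_le_tsum (fun v =>
        (mul_le_mul_of_nonneg_right (hdom v) (hF0 v))) hcolsum hDsum
  -- row summability of the operator kernel against f
  have hfb : ∀ u, ‖f u‖ ≤ ‖f‖ := fun u => lp.norm_apply_le_norm (by norm_num) f u
  have hnrow : ∀ v, Summable (fun u => ‖t v u * f u‖) := by
    intro v
    refine Summable.of_nonneg_of_le (fun u => norm_nonneg _) (fun u => ?_)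
      ((hsum v).mul_right ‖f‖)
    rw [norm_mul]
    exact mul_le_mul_of_nonneg_left (hfb u) (norm_nonneg _)
  set c : V → ℂ := fun v => (starRingEnd ℂ) (f v) * ∑' u, t v u * f u with hcdef
  obtain ⟨hgprow, hgpcol⟩ := (summable_prod_of_nonneg hgpnonneg).mp hgpsum
  have hcnorm : ∀ v, ‖c v‖ ≤ ∑' u, gp (v, u) := by
    intro v
    calc ‖c v‖ = ‖f v‖ * ‖∑' u, t v u * f u‖ := by
          rw [hcdef]; simp [norm_mul]
      _ ≤ ‖f v‖ * ∑' u, ‖t v u * f u‖ :=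
          mul_le_mul_of_nonneg_left (norm_tsum_le_tsum_norm (hnrow v)) (norm_nonneg _)
      _ = ∑' u, gp (v, u) := by
          rw [← tsum_mul_left]
          refine tsum_congr fun u => ?_
          simp only [hgpdef, norm_mul]; ring
  have hcnormsum : Summable (fun v => ‖c v‖) :=
    Summable.of_nonneg_of_le (fun v => norm_nonneg _) hcnorm hgpcol
  have hcsum : Summable c := Summable.of_norm hcnormsum
  have hXle : |(∑' v, c v).re| ≤ D := by
    calc |(∑' v, c v).re| ≤ ‖∑' v, c v‖ := Complex.abs_re_le_norm _
      _ ≤ ∑' v, ‖c v‖ := norm_tsum_le_tsum_norm hcnormsum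
      _ ≤ ∑' v, ∑' u, gp (v, u) := Summable.tsum_le_tsum hcnorm hcnormsum hgpcol
      _ = ∑' p, gp p := (Summable.tsum_prod' hgpsum hgprow).symm
      _ ≤ D := hGle
  -- the diagonal part
  set e : V → ℂ := fun v => (d v : ℂ) * ((starRingEnd ℂ) (f v) * f v) with hedef
  have heval : ∀ v, e v = ((d v * F v : ℝ) : ℂ) := by
    intro v
    rw [hedef]
    simp only []
    rw [RCLike.conj_mul]
    push_cast
    simp [hFdef]
  have hesum : Summable e := by
    rw [show e = fun v => ((d v * F v : ℝ) : ℂ) from funext heval]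
    exact Complex.summable_ofReal.mpr hDsum
  -- decompose the quadratic form
  have hsplit : ∀ v, (starRingEnd ℂ) (f v) * (A f) v = e v - c v := by
    intro v
    rw [hA f v, hedef, hcdef]
    ring
  have hip : (inner (𝕜 := ℂ) f (A f)) = (∑' v, e v) - ∑' v, c v := by
    rw [lp.inner_eq_tsum]
    rw [show (fun v => (inner (𝕜 := ℂ) (f v) ((A f) v))) = fun v => e v - c v from
      funext fun v => by rw [RCLike.inner_apply, mul_comm]; exact hsplit v]
    exact Summable.tsum_sub hesum hcsum
  have hre : (inner (𝕜 := ℂ) f (A f)).re = D - (∑' v, c v).re := by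
    rw [hip, Complex.sub_re]
    congr 1
    rw [Complex.re_tsum hesum, hDdef]
    exact tsum_congr fun v => by rw [heval]; simp
  obtain ⟨hX1, hX2⟩ := abs_le.mp hXle
  constructor
  · rw [hre]; linarith
  · rw [hre, hnorm]; linarith
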